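/- If B is a primitive (2n+2)-th root of unity with B ≠ ±1, then d = B + B^{-1} is a simple root of the Chebyshev polynomial Δ_n. -/

import Mathlib

open Polynomial

/-- The Chebyshev-type polynomials `Δ_n`. -/
noncomputable def cheb : ℕ → Polynomial ℂ
  | 0 => 1
  | 1 => X
  | (n + 2) => X * cheb (n + 1) - cheb n

lemma cheb_key1 : ∀ (m : ℕ) (y z : ℂ), z * y = z ^ 2 + 1 →
    (z ^ 2 - 1) * (cheb m).eval y * z ^ m = z ^ (2 * m + 2) - 1
  | 0, y, z, h => by simp [cheb]
  | 1, y, z, h => by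
      simp only [cheb, eval_X]
      linear_combination (z ^ 2 - 1) * h
  | (m + 2), y, z, h => by
      have e1 := cheb_key1 (m + 1) y z h
      have e2 := cheb_key1 m y z h
      simp only [cheb, eval_sub, eval_mul, eval_X]
      linear_combination (y * z) * e1 - z ^ 2 * e2 + (z ^ (2 * m + 4) - 1) * h

lemma cheb_key2 : ∀ (m : ℕ) (y z : ℂ), z * y = z ^ 2 + 1 →
    (z ^ 2 - 1) ^ 3 * ((cheb m).derivative).eval y * z ^ m =
      ((m : ℂ) + 1) * (z ^ (2 * m + 2) + 1) * (z ^ 2 - 1) * z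
        - (z ^ (2 * m + 2) - 1) * (z ^ 2 + 1) * z
  | 0, y, z, h => by simp [cheb]; ring
  | 1, y, z, h => by simp [cheb]; ring
  | (m + 2), y, z, h => by
      have k := cheb_key1 (m + 1) y z h
      have e1 := cheb_key2 (m + 1) y z h
      have e2 := cheb_key2 m y z h
      have hD : (cheb (m + 2)).derivative
          = cheb (m + 1) + X * (cheb (m + 1)).derivative - (cheb m).derivative := by
        show (X * cheb (m + 1) - cheb m).derivative = _
        simp [derivative_mul]
      rw [hD]
      simp only [eval_sub, eval_add, eval_mul, eval_X]
      push_cast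
      push_cast at e1 e2
      linear_combination ((z ^ 2 - 1) ^ 2 * z) * k + (y * z) * e1 - z ^ 2 * e2
        + (((m : ℂ) + 2) * (z ^ (2 * m + 4) + 1) * (z ^ 2 - 1) * z
            - (z ^ (2 * m + 4) - 1) * (z ^ 2 + 1) * z) * h

theorem cheb_simple_root (n : ℕ) (B : ℂ) (hB : IsPrimitiveRoot B (2 * n + 2))
    (hB1 : B ≠ 1) (hB2 : B ≠ -1) :
    (X - C (B + B⁻¹)) ∣ cheb n ∧ ¬ ((X - C (B + B⁻¹)) ^ 2 ∣ cheb n) := by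
  have hz : B ≠ 0 := by
    intro h
    have := hB.pow_eq_one
    simp [h] at this
  have hy : B * (B + B⁻¹) = B ^ 2 + 1 := by
    field_simp
  have hpow : B ^ (2 * n + 2) = 1 := hB.pow_eq_one
  have hsq : B ^ 2 - 1 ≠ 0 := by
    intro h
    have : (B - 1) * (B + 1) = 0 := by linear_combination h
    rcases mul_eq_zero.1 this with h' | h'
    · exact hB1 (by linear_combination h')
    · exact hB2 (by linear_combination h')
  -- value is zero
  have hval : (cheb n).eval (B + B⁻¹) = 0 := by
    have := cheb_key1 n (B + B⁻¹) B hy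
    rw [hpow] at this
    have hzn : B ^ n ≠ 0 := pow_ne_zero _ hz
    have : (B ^ 2 - 1) * (cheb n).eval (B + B⁻¹) * B ^ n = 0 := by
      rw [this]; ring
    rcases mul_eq_zero.1 this with h' | h'
    · rcases mul_eq_zero.1 h' with h'' | h''
      · exact absurd h'' hsq
      · exact h''
    · exact absurd h' hzn
  have hdvd : (X - C (B + B⁻¹)) ∣ cheb n := dvd_iff_isRoot.2 hval
  refine ⟨hdvd, ?_⟩
  -- derivative is nonzero
  have hder : ((cheb n).derivative).eval (B + B⁻¹) ≠ 0 := by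
    have h2 := cheb_key2 n (B + B⁻¹) B hy
    rw [hpow] at h2
    intro h0
    rw [h0] at h2
    have hrhs : ((n : ℂ) + 1) * (1 + 1) * (B ^ 2 - 1) * B - (1 - 1) * (B ^ 2 + 1) * B = 0 := by
      rw [← h2]; ring
    have hn1 : ((n : ℂ) + 1) ≠ 0 := Nat.cast_add_one_ne_zero n
    have h00 : ((n : ℂ) + 1) * (1 + 1) * (B ^ 2 - 1) * B = 0 := by linear_combination hrhs
    have hne : ((n : ℂ) + 1) * (1 + 1) * (B ^ 2 - 1) * B ≠ 0 := by
      apply mul_ne_zero _ hz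
      apply mul_ne_zero _ hsq
      apply mul_ne_zero hn1
      norm_num
    exact hne h00
  intro ⟨q, hq⟩
  apply hder
  have := congrArg (fun p => (derivative p).eval (B + B⁻¹)) hq
  simpa [derivative_mul, derivative_pow] using this
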